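/- Let n ≥ 1 be a natural number, let a : Fin (n+1) → ℤ be injective, let c ∈ ℤ, and let σ : Fin n → Fin (n+1) be a function with σ i ≠ Fin.castSucc i for every i : Fin n. Suppose that for every i : Fin n, ∑_{j : Fin (n+1), j ≠ Fin.castSucc i, j ≠ σ i} ( a (Fin.castSucc i) − a j ) = n · a (Fin.castSucc i) + c. Then σ i = Fin.last n for every i : Fin n, and c = − ∑_{i : Fin n} a (Fin.castSucc i). -/

import Mathlib

/-- combinatorial core of Lemma 5.2. Let `n ≥ 1`, let
`a : Fin (n+1) → ℤ` be injective, let `c : ℤ`, and let `σ : Fin n → Fin (n+1)` satisfy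
`σ i ≠ Fin.castSucc i` for all `i`. If for every `i : Fin n` the sum of
`a (Fin.castSucc i) - a j` over all `j` different from both `Fin.castSucc i` and `σ i`
equals `n * a (Fin.castSucc i) + c`, then `σ i = Fin.last n` for every `i` and
`c = - ∑ i, a (Fin.castSucc i)`. -/
theorem stmt_10 (n : ℕ) (hn : 1 ≤ n) (a : Fin (n + 1) → ℤ)
    (ha : Function.Injective a) (c : ℤ) (σ : Fin n → Fin (n + 1))
    (hσ : ∀ i : Fin n, σ i ≠ Fin.castSucc i)
    (h : ∀ i : Fin n,
      ∑ j ∈ Finset.univ.filter (fun j : Fin (n + 1) => j ≠ Fin.castSucc i ∧ j ≠ σ i),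
        (a (Fin.castSucc i) - a j) = n * a (Fin.castSucc i) + c) :
    (∀ i : Fin n, σ i = Fin.last n) ∧ c = -∑ i : Fin n, a (Fin.castSucc i) := by
  set S := ∑ j, a j with hS
  have key : ∀ i : Fin n, a (σ i) = S + c := by
    intro i
    have hi := h i
    have hne : Fin.castSucc i ≠ σ i := (hσ i).symm
    have hsplit := Finset.sum_filter_add_sum_filter_not Finset.univ
      (fun j : Fin (n + 1) => j ≠ Fin.castSucc i ∧ j ≠ σ i)
      (fun j => a (Fin.castSucc i) - a j)
    have hnotset : Finset.univ.filter
        (fun j : Fin (n + 1) => ¬(j ≠ Fin.castSucc i ∧ j ≠ σ i))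
        = {Fin.castSucc i, σ i} := by
      ext j
      simp [not_and_or, not_not]
      tauto
    have htot : ∑ j : Fin (n + 1), (a (Fin.castSucc i) - a j)
        = (n + 1) * a (Fin.castSucc i) - S := by
      rw [Finset.sum_sub_distrib, Finset.sum_const, Finset.card_univ, Fintype.card_fin]
      ring_nf
      rw [hS]
    rw [hnotset, Finset.sum_pair hne, htot, hi] at hsplit
    linarith
  have hconst : ∀ i i' : Fin n, σ i = σ i' := by
    intro i i'
    exact ha (by rw [key i, key i'])
  have hlast : ∀ i : Fin n, σ i = Fin.last n := by
    intro i
    rcases Fin.eq_castSucc_or_eq_last (σ i) with ⟨k, hk⟩ | hk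
    · exact absurd ((hconst k i).trans hk) (hσ k)
    · exact hk
  refine ⟨hlast, ?_⟩
  obtain ⟨i0⟩ : Nonempty (Fin n) := ⟨⟨0, hn⟩⟩
  have := key i0
  rw [hlast i0] at this
  have hSsplit : S = (∑ i : Fin n, a (Fin.castSucc i)) + a (Fin.last n) := by
    rw [hS, Fin.sum_univ_castSucc]
  linarith
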